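/- (Reduced power flow equation for the quadratic droop network) Let B be a susceptance matrix partitioned into load and inverter blocks, K_I a diagonal matrix with strictly negative diagonal entries, and E_I* ∈ ℝ^m strictly positive, with B_II + K_I and B_red invertible. Given load functions Q_i: ℝ_{>0} → ℝ, the following are equivalent: (i) the pair (E_L, E_I) ∈ ℝ^n_{>0} × ℝ^m_{>0} is an equilibrium of the quadratic-droop closed loop; (ii) E_L ∈ ℝ^n_{>0} solves the reduced power flow equation 0 = Q_L(E_L) + [E_L]B_red(E_L − E_L*) and E_I = W_2 applied to (E_L, E_I*), i.e., E_I = (B_II+K_I)^{−1}(−B_IL E_L + K_I E_I*), which moreover has strictly positive entries. -/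

import Mathlib

open Matrix

def suscGraph {V : Type*} (B : Matrix V V ℝ) : SimpleGraph V where
  Adj i j := i ≠ j ∧ 0 < B i j ∧ 0 < B j i
  symm := ⟨fun _ _ h => ⟨h.1.symm, h.2.2, h.2.1⟩⟩
  loopless := ⟨fun _ h => h.1 rfl⟩

def IsSusceptance {V : Type*} [Fintype V] [DecidableEq V] (B : Matrix V V ℝ) : Prop :=
  B.IsSymm ∧ (∀ i j, i ≠ j → 0 ≤ B i j) ∧
    (∀ i, B i i = -∑ j ∈ Finset.univ.erase i, B i j) ∧ (suscGraph B).Connected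

lemma diag_mulVec_zero_iff {p : ℕ} {d v : Fin p → ℝ} (hd : ∀ i, 0 < d i) :
    ((0 : Fin p → ℝ) = (Matrix.diagonal d).mulVec v) ↔ v = 0 := by
  constructor
  · intro h
    funext i
    have h2 := congrFun h i
    rw [Matrix.mulVec_diagonal] at h2
    simpa using (mul_eq_zero.mp h2.symm).resolve_left (hd i).ne'
  · intro h; rw [h, Matrix.mulVec_zero]

theorem reduced_power_flow_equivalence {n m : ℕ} (hn : 0 < n) (hm : 0 < m)
    (B : Matrix (Fin n ⊕ Fin m) (Fin n ⊕ Fin m) ℝ) (hB : IsSusceptance B)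
    (k : Fin m → ℝ) (hk : ∀ i, k i < 0)
    (EIstar : Fin m → ℝ) (hEIstar : ∀ i, 0 < EIstar i)
    (hinv1 : IsUnit (B.toBlocks₂₂ + Matrix.diagonal k).det)
    (Bred : Matrix (Fin n) (Fin n) ℝ)
    (hBred : Bred = B.toBlocks₁₁ -
      B.toBlocks₁₂ * (B.toBlocks₂₂ + Matrix.diagonal k)⁻¹ * B.toBlocks₂₁)
    (hinv2 : IsUnit Bred.det)
    (ELstar : Fin n → ℝ)
    (hELstar : ELstar = (-(Bred⁻¹ * B.toBlocks₁₂ *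
      (B.toBlocks₂₂ + Matrix.diagonal k)⁻¹ * Matrix.diagonal k)).mulVec EIstar)
    (Q : Fin n → ℝ → ℝ) (EL : Fin n → ℝ) (EI : Fin m → ℝ) :
    -- (i) (E_L, E_I) is a positive equilibrium of the closed loop
    ((∀ i, 0 < EL i) ∧ (∀ i, 0 < EI i) ∧
      ((0 : Fin n → ℝ) = (fun i => Q i (EL i)) +
        (Matrix.diagonal EL).mulVec (B.toBlocks₁₁.mulVec EL + B.toBlocks₁₂.mulVec EI)) ∧
      ((0 : Fin m → ℝ) =
        (Matrix.diagonal EI).mulVec ((Matrix.diagonal k).mulVec (EI - EIstar)) +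
        (Matrix.diagonal EI).mulVec (B.toBlocks₂₁.mulVec EL + B.toBlocks₂₂.mulVec EI)))
    ↔
    -- (ii) E_L positive solves the reduced power flow equation and E_I is recovered
    ((∀ i, 0 < EL i) ∧
      ((0 : Fin n → ℝ) = (fun i => Q i (EL i)) +
        (Matrix.diagonal EL).mulVec (Bred.mulVec (EL - ELstar))) ∧
      EI = (B.toBlocks₂₂ + Matrix.diagonal k)⁻¹.mulVec
        (-(B.toBlocks₂₁.mulVec EL) + (Matrix.diagonal k).mulVec EIstar) ∧
      (∀ i, 0 < EI i)) := by
  set A := B.toBlocks₂₂ + Matrix.diagonal k with hA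
  set w : Fin m → ℝ := -(B.toBlocks₂₁.mulVec EL) + (Matrix.diagonal k).mulVec EIstar with hw
  have hA1 : A⁻¹ * A = 1 := Matrix.nonsing_inv_mul A hinv1
  have hA2 : A * A⁻¹ = 1 := Matrix.mul_nonsing_inv A hinv1
  -- key rewriting of the inner vector of the inverter equation
  have hv : (Matrix.diagonal k).mulVec (EI - EIstar) +
      (B.toBlocks₂₁.mulVec EL + B.toBlocks₂₂.mulVec EI) = A.mulVec EI - w := by
    rw [hA, hw, Matrix.add_mulVec, Matrix.mulVec_sub]
    abel
  -- the inverter equation is equivalent to the recovery formula, for positive EI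
  have hEIiff : ∀ (hEIpos : ∀ i, 0 < EI i),
      (((0 : Fin m → ℝ) =
        (Matrix.diagonal EI).mulVec ((Matrix.diagonal k).mulVec (EI - EIstar)) +
        (Matrix.diagonal EI).mulVec (B.toBlocks₂₁.mulVec EL + B.toBlocks₂₂.mulVec EI))
      ↔ EI = A⁻¹.mulVec w) := by
    intro hEIpos
    rw [← Matrix.mulVec_add, diag_mulVec_zero_iff hEIpos, hv, sub_eq_zero]
    constructor
    · intro h
      have := congrArg (A⁻¹.mulVec ·) h
      simpa [Matrix.mulVec_mulVec, hA1] using this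
    · intro h
      rw [h, Matrix.mulVec_mulVec, hA2, Matrix.one_mulVec]
  -- the substituted load equation
  have hsub : B.toBlocks₁₁.mulVec EL + B.toBlocks₁₂.mulVec (A⁻¹.mulVec w) =
      Bred.mulVec (EL - ELstar) := by
    have hEL : Bred.mulVec ELstar =
        -((B.toBlocks₁₂ * A⁻¹ * Matrix.diagonal k).mulVec EIstar) := by
      rw [hELstar, Matrix.mulVec_mulVec, Matrix.mul_neg, ← Matrix.mul_assoc,
        ← Matrix.mul_assoc, ← Matrix.mul_assoc, Matrix.mul_nonsing_inv _ hinv2,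
        Matrix.one_mul, Matrix.neg_mulVec, Matrix.mul_assoc]
    rw [Matrix.mulVec_sub, hEL, hw, Matrix.mulVec_mulVec, Matrix.mulVec_add,
      Matrix.mulVec_neg, Matrix.mulVec_mulVec, Matrix.mulVec_mulVec, hBred,
      Matrix.sub_mulVec, Matrix.mul_assoc]
    abel
  constructor
  · rintro ⟨hELpos, hEIpos, h1, h2⟩
    have hEIeq : EI = A⁻¹.mulVec w := (hEIiff hEIpos).mp h2
    refine ⟨hELpos, ?_, hEIeq, hEIpos⟩
    rw [← hsub, ← hEIeq]; exact h1
  · rintro ⟨hELpos, h1, hEIeq, hEIpos⟩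
    refine ⟨hELpos, hEIpos, ?_, (hEIiff hEIpos).mpr hEIeq⟩
    rw [hEIeq, hsub]; exact h1
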